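/- For every θ ∈ [-4, 2], the function h_θ(x) = (1 - 0.5θ)x - θ(x³ - 1.5x²) is monotone (strictly increasing for θ ∈ (-4,2), hence injective) on [0,1]. -/

import Mathlib

/-- The ECAP bias-correction link function. -/
noncomputable def hLink (θ x : ℝ) : ℝ := (1 - 0.5 * θ) * x - θ * (x ^ 3 - 1.5 * x ^ 2)

lemma hLink_hasDerivAt (θ x : ℝ) :
    HasDerivAt (hLink θ) (1 - 0.5 * θ - 3 * θ * x ^ 2 + 3 * θ * x) x := by
  have h : HasDerivAt (fun x : ℝ => (1 - 0.5 * θ) * x - θ * (x ^ 3 - 1.5 * x ^ 2))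
      ((1 - 0.5 * θ) * 1 - θ * (3 * x ^ 2 - 1.5 * (2 * x))) x := by
    exact (((hasDerivAt_id x).const_mul (1 - 0.5 * θ)).sub
      (((hasDerivAt_pow 3 x).sub ((hasDerivAt_pow 2 x).const_mul 1.5)).const_mul θ)).congr_deriv
      (by ring)
  unfold hLink
  convert h using 1 <;> ring

lemma hLink_deriv (θ x : ℝ) :
    deriv (hLink θ) x = 1 - 0.5 * θ - 3 * θ * x ^ 2 + 3 * θ * x :=
  (hLink_hasDerivAt θ x).deriv

lemma hLink_cont (θ : ℝ) : ContinuousOn (hLink θ) (Set.Icc (0 : ℝ) 1) :=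
  fun x _ => (hLink_hasDerivAt θ x).differentiableAt.continuousAt.continuousWithinAt

/-- For `θ ∈ [-4, 2]`, `h_θ` is monotone on `[0,1]`; for `θ ∈ (-4,2)` it is
strictly increasing, hence injective, on `[0,1]`. -/
theorem hLink_monotone :
    (∀ θ ∈ Set.Icc (-4 : ℝ) 2, MonotoneOn (hLink θ) (Set.Icc (0 : ℝ) 1)) ∧
    (∀ θ ∈ Set.Ioo (-4 : ℝ) 2, StrictMonoOn (hLink θ) (Set.Icc (0 : ℝ) 1) ∧
      Set.InjOn (hLink θ) (Set.Icc (0 : ℝ) 1)) := by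
  constructor
  · intro θ hθ
    obtain ⟨h1, h2⟩ := hθ
    apply monotoneOn_of_deriv_nonneg (convex_Icc 0 1) (hLink_cont θ)
    · intro x _
      exact (hLink_hasDerivAt θ x).differentiableAt.differentiableWithinAt
    · intro x hx
      rw [interior_Icc] at hx
      rw [hLink_deriv]
      obtain ⟨hx0, hx1⟩ := hx
      nlinarith [mul_nonneg (by linarith : (0:ℝ) ≤ 2 - θ) (sq_nonneg (1 - 2*x)),
        mul_nonneg (by linarith : (0:ℝ) ≤ θ + 4) (mul_nonneg hx0.le (by linarith : (0:ℝ) ≤ 1 - x))]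
  · intro θ hθ
    obtain ⟨h1, h2⟩ := hθ
    have hs : StrictMonoOn (hLink θ) (Set.Icc (0 : ℝ) 1) := by
      apply strictMonoOn_of_deriv_pos (convex_Icc 0 1) (hLink_cont θ)
      intro x hx
      rw [interior_Icc] at hx
      rw [hLink_deriv]
      obtain ⟨hx0, hx1⟩ := hx
      nlinarith [mul_nonneg (by linarith : (0:ℝ) ≤ 2 - θ) (sq_nonneg (1 - 2*x)),
        mul_pos (by linarith : (0:ℝ) < θ + 4) (mul_pos hx0 (by linarith : (0:ℝ) < 1 - x))]
    exact ⟨hs, hs.injOn⟩
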